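/- Splitting Lemma: let f : Ω_D → ℍ be a slice regular function, and let J, K ∈ 𝕊 with JK = −KJ (K orthogonal to J). Then there exist functions G, H : D → ℂ, holomorphic on D, such that for every z = α + iβ ∈ D one has f(α + Jβ) = (Re G(z) + J·Im G(z)) + (Re H(z) + J·Im H(z))·K. -/

import Mathlib

/- Identify ℍ with `Quaternion ℝ`.  A slice function on the circularization of a
conjugation-symmetric open set `D ⊆ ℂ` is induced by a stem function `(F₁, F₂)`;
it is slice regular if `F₁, F₂` are real-differentiable on `D` and satisfy the
Cauchy-Riemann system `∂F₁/∂α = ∂F₂/∂β`, `∂F₁/∂β = -∂F₂/∂α`. -/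

open scoped RealInnerProductSpace

private lemma quat_sq_neg_one_re {J : Quaternion ℝ} (hJ : J ^ 2 = -1) : J.re = 0 := by
  rw [sq] at hJ
  have h1 : (J*J).re = (-1 : Quaternion ℝ).re := by rw [hJ]
  have h2 : (J*J).imI = (-1 : Quaternion ℝ).imI := by rw [hJ]
  have h3 : (J*J).imJ = (-1 : Quaternion ℝ).imJ := by rw [hJ]
  have h4 : (J*J).imK = (-1 : Quaternion ℝ).imK := by rw [hJ]
  simp [Quaternion.re_mul, Quaternion.imI_mul, Quaternion.imJ_mul, Quaternion.imK_mul, Quaternion.re_one,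
    Quaternion.imI_one, Quaternion.imJ_one, Quaternion.imK_one]
    at h1 h2 h3 h4
  have h5 : J.re^2 * (J.re^2 + 1) = 0 := by nlinarith [h1, h2, h3, h4]
  have h6 : J.re^2 = 0 := by nlinarith [sq_nonneg J.re]
  exact pow_eq_zero_iff (n := 2) (by norm_num) |>.mp h6

private lemma quat_re_comm (a b : Quaternion ℝ) : (a*b).re = (b*a).re := by
  simp [Quaternion.re_mul]; ring

private lemma quat_coe_smul_one (r : ℝ) : (r : Quaternion ℝ) = r • (1 : Quaternion ℝ) := by
  rw [← Quaternion.coe_one, Quaternion.smul_coe, mul_one]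

/-- inner product rotation: `⟪u, J x⟫ = -⟪J u, x⟫` for purely imaginary `J`. -/
private lemma quat_inner_rot {J : Quaternion ℝ} (hsJ : star J = -J) (u x : Quaternion ℝ) :
    ⟪u, J*x⟫ = -⟪J*u, x⟫ := by
  rw [Quaternion.inner_def, Quaternion.inner_def, star_mul, hsJ]
  rw [show u * (star x * -J) = -((u * star x) * J) by
    rw [mul_neg, mul_neg, mul_assoc]]
  rw [Quaternion.re_neg, quat_re_comm (u * star x) J, ← mul_assoc]

/-- the real-linear "complex coordinate" map `x ↦ ⟪u,x⟫ + i ⟪v,x⟫`. -/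
noncomputable def quatCoord (u v : Quaternion ℝ) : Quaternion ℝ →L[ℝ] ℂ :=
  Complex.ofRealCLM.comp (innerSL ℝ u) + Complex.I • (Complex.ofRealCLM.comp (innerSL ℝ v))

lemma quatCoord_apply (u v x : Quaternion ℝ) :
    quatCoord u v x = (⟪u, x⟫ : ℂ) + Complex.I * (⟪v, x⟫ : ℂ) := by
  simp [quatCoord, smul_eq_mul]

set_option maxHeartbeats 1000000 in
/-- **Splitting Lemma** for slice regular functions:
for `J, K ∈ 𝕊` with `JK = -KJ` there are functions `G, H : D → ℂ`, holomorphic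
on `D`, such that `f (α + Jβ) = (Re G + J Im G) + (Re H + J Im H) K` on `D`. -/
theorem splitting_lemma
    (D : Set ℂ) (hne : D.Nonempty) (hDopen : IsOpen D)
    (hDsymm : ∀ z ∈ D, (starRingEnd ℂ) z ∈ D)
    (F₁ F₂ : ℂ → Quaternion ℝ)
    (hstem : ∀ z ∈ D,
      F₁ ((starRingEnd ℂ) z) = F₁ z ∧ F₂ ((starRingEnd ℂ) z) = - F₂ z)
    (f : Quaternion ℝ → Quaternion ℝ)
    (hslice : ∀ z ∈ D, ∀ I : Quaternion ℝ, I ^ 2 = -1 →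
      f ((z.re : Quaternion ℝ) + I * (z.im : Quaternion ℝ)) = F₁ z + I * F₂ z)
    (hreg : ∀ z ∈ D, ∃ D₁ D₂ : ℂ →L[ℝ] Quaternion ℝ,
      HasFDerivAt F₁ D₁ z ∧ HasFDerivAt F₂ D₂ z ∧
      D₁ 1 = D₂ Complex.I ∧ D₁ Complex.I = - D₂ 1)
    (J K : Quaternion ℝ) (hJ : J ^ 2 = -1) (hK : K ^ 2 = -1)
    (hJK : J * K = - (K * J)) :
    ∃ G H : ℂ → ℂ, DifferentiableOn ℂ G D ∧ DifferentiableOn ℂ H D ∧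
      ∀ z ∈ D,
        f ((z.re : Quaternion ℝ) + J * (z.im : Quaternion ℝ)) =
          (((G z).re : Quaternion ℝ) + J * ((G z).im : Quaternion ℝ))
            + (((H z).re : Quaternion ℝ) + J * ((H z).im : Quaternion ℝ)) * K := by
  have hJre := quat_sq_neg_one_re hJ
  have hKre := quat_sq_neg_one_re hK
  have hsJ : star J = -J := Quaternion.star_eq_neg.mpr hJre
  have hsK : star K = -K := Quaternion.star_eq_neg.mpr hKre
  have hJJ : J * J = -1 := by rw [← sq]; exact hJ
  have hKK : K * K = -1 := by rw [← sq]; exact hK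
  have reJK : (J*K).re = 0 := by
    have h1 : (J*K).re = -((K*J).re) := by rw [hJK]; simp
    have h2 := quat_re_comm J K
    linarith
  -- orthonormality of (1, J, K, JK)
  have horth : Orthonormal ℝ ![1, J, K, J*K] := by
    have rKJ : (K*J).re = 0 := by rw [quat_re_comm]; exact reJK
    have rJKJ : (J*(K*J)).re = 0 := by
      rw [quat_re_comm, mul_assoc, hJJ]; simp [hKre]
    have rKKJ : (K*(K*J)).re = 0 := by
      rw [← mul_assoc, hKK]; simp [hJre]
    have rJKKJ : ((J*K)*(K*J)).re = 1 := by
      rw [mul_assoc, ← mul_assoc K K, hKK]; simp [hJJ, Quaternion.re_one]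
    have hnJ : ‖J‖ = 1 := by
      have h := Quaternion.normSq_eq_norm_mul_self J
      rw [Quaternion.normSq_def, hsJ, mul_neg, hJJ] at h
      simp only [neg_neg, Quaternion.re_one] at h
      nlinarith [norm_nonneg J]
    have hnK : ‖K‖ = 1 := by
      have h := Quaternion.normSq_eq_norm_mul_self K
      rw [Quaternion.normSq_def, hsK, mul_neg, hKK] at h
      simp only [neg_neg, Quaternion.re_one] at h
      nlinarith [norm_nonneg K]
    rw [orthonormal_iff_ite]
    intro i j
    fin_cases i <;> fin_cases j <;>
      simp [Quaternion.inner_def, star_mul, hsJ, hsK, mul_neg, neg_mul, neg_neg,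
        hJre, hKre, reJK, hJJ, hKK, rKJ, rJKJ, rKKJ, rJKKJ, quat_re_comm J (K*J),
        quat_re_comm K (K*J), quat_re_comm (J*K) (K*J), hnJ, hnK] <;> ring
  -- decomposition along the orthonormal basis (1, J, K, JK)
  have hdecomp : ∀ x : Quaternion ℝ, x =
      ((⟪(1:Quaternion ℝ), x⟫ : ℝ) : Quaternion ℝ) + J * ((⟪J, x⟫ : ℝ) : Quaternion ℝ)
        + (((⟪K, x⟫ : ℝ) : Quaternion ℝ) + J * ((⟪J*K, x⟫ : ℝ) : Quaternion ℝ)) * K := by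
    have hcard : Fintype.card (Fin 4) = Module.finrank ℝ (Quaternion ℝ) := by
      simp [Quaternion.finrank_eq_four]
    let b := basisOfLinearIndependentOfCardEqFinrank horth.linearIndependent hcard
    have hbe : ⇑b = ![1, J, K, J*K] := coe_basisOfLinearIndependentOfCardEqFinrank _ _
    let ob := b.toOrthonormalBasis (by rwa [hbe])
    have hob : ⇑ob = ![1, J, K, J*K] := by rw [Module.Basis.coe_toOrthonormalBasis, hbe]
    intro x
    have h := ob.sum_repr' x
    rw [Fin.sum_univ_four] at h
    simp only [hob, Matrix.cons_val_zero, Matrix.cons_val_one, Matrix.head_cons,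
      Matrix.cons_val_two, Matrix.tail_cons, Matrix.cons_val_three] at h
    conv_lhs => rw [← h]
    simp only [Quaternion.mul_coe_eq_smul]
    simp only [add_mul, smul_mul_assoc, Quaternion.coe_mul_eq_smul]
    simp only [quat_coe_smul_one]
    module
  -- the two coordinate maps
  set A := quatCoord 1 J with hA
  set B := quatCoord K (J*K) with hB
  -- rotation identities
  have hJmul : ∀ y : Quaternion ℝ, J * (J * y) = -y := fun y => by
    rw [← mul_assoc, hJJ, neg_one_mul]
  have hArot : ∀ x, A (J * x) = Complex.I * A x := by
    intro x
    rw [hA, quatCoord_apply, quatCoord_apply,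
      quat_inner_rot hsJ 1 x, quat_inner_rot hsJ J x, mul_one, hJJ]
    rw [show ⟪(-1 : Quaternion ℝ), x⟫ = -⟪(1 : Quaternion ℝ), x⟫ by
      rw [← neg_one_smul ℝ (1 : Quaternion ℝ), real_inner_smul_left]; ring]
    push_cast
    linear_combination (-(⟪J, x⟫ : ℂ)) * Complex.I_sq
  have hBrot : ∀ x, B (J * x) = Complex.I * B x := by
    intro x
    rw [hB, quatCoord_apply, quatCoord_apply,
      quat_inner_rot hsJ K x, quat_inner_rot hsJ (J*K) x]
    rw [show J * (J * K) = -K by rw [hJmul]]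
    rw [show ⟪(-K : Quaternion ℝ), x⟫ = -⟪K, x⟫ by
      rw [← neg_one_smul ℝ K, real_inner_smul_left]; ring]
    push_cast
    linear_combination (-(⟪J*K, x⟫ : ℂ)) * Complex.I_sq
  -- the candidate functions
  refine ⟨fun w => A (F₁ w + J * F₂ w), fun w => B (F₁ w + J * F₂ w), ?_, ?_, ?_⟩
  · -- differentiability of G
    intro z hz
    obtain ⟨D₁, D₂, hD₁, hD₂, hc1, hc2⟩ := hreg z hz
    set L : ℂ →L[ℝ] Quaternion ℝ :=
      D₁ + (ContinuousLinearMap.mul ℝ (Quaternion ℝ) J).comp D₂ with hLdef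
    have hfJ : HasFDerivAt (fun w => F₁ w + J * F₂ w) L z :=
      hD₁.add (((ContinuousLinearMap.mul ℝ (Quaternion ℝ) J).hasFDerivAt).comp z hD₂)
    have hGr : HasFDerivAt (fun w => A (F₁ w + J * F₂ w)) (A.comp L) z :=
      (A.hasFDerivAt).comp z hfJ
    have hLI : L Complex.I = J * L 1 := by
      simp only [hLdef, ContinuousLinearMap.add_apply, ContinuousLinearMap.comp_apply,
        ContinuousLinearMap.mul_apply', hc2, ← hc1, mul_add, hJmul]
      abel
    have heq : (ContinuousLinearMap.mul ℂ ℂ (A (L 1))).restrictScalars ℝ = A.comp L := by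
      apply ContinuousLinearMap.ext
      intro w
      have h2 : L w = w.re • L 1 + w.im • L Complex.I := by
        conv_lhs => rw [← Complex.re_add_im w]
        rw [show ((w.re : ℂ) + (w.im : ℂ) * Complex.I) = w.re • (1:ℂ) + w.im • Complex.I by
          simp [Complex.real_smul]]
        rw [map_add, map_smul, map_smul]
      simp only [ContinuousLinearMap.coe_restrictScalars', ContinuousLinearMap.mul_apply',
        ContinuousLinearMap.comp_apply, h2, map_add, map_smul, hLI, hArot]
      conv_lhs => rw [← Complex.re_add_im w]
      simp only [Complex.real_smul]
      push_cast
      ring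
    have hGc : HasFDerivAt (fun w => A (F₁ w + J * F₂ w))
        (ContinuousLinearMap.mul ℂ ℂ (A (L 1))) z :=
      hasFDerivAt_of_restrictScalars ℝ hGr heq
    exact hGc.differentiableAt.differentiableWithinAt
  · -- differentiability of H
    intro z hz
    obtain ⟨D₁, D₂, hD₁, hD₂, hc1, hc2⟩ := hreg z hz
    set L : ℂ →L[ℝ] Quaternion ℝ :=
      D₁ + (ContinuousLinearMap.mul ℝ (Quaternion ℝ) J).comp D₂ with hLdef
    have hfJ : HasFDerivAt (fun w => F₁ w + J * F₂ w) L z :=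
      hD₁.add (((ContinuousLinearMap.mul ℝ (Quaternion ℝ) J).hasFDerivAt).comp z hD₂)
    have hGr : HasFDerivAt (fun w => B (F₁ w + J * F₂ w)) (B.comp L) z :=
      (B.hasFDerivAt).comp z hfJ
    have hLI : L Complex.I = J * L 1 := by
      simp only [hLdef, ContinuousLinearMap.add_apply, ContinuousLinearMap.comp_apply,
        ContinuousLinearMap.mul_apply', hc2, ← hc1, mul_add, hJmul]
      abel
    have heq : (ContinuousLinearMap.mul ℂ ℂ (B (L 1))).restrictScalars ℝ = B.comp L := by
      apply ContinuousLinearMap.ext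
      intro w
      have h2 : L w = w.re • L 1 + w.im • L Complex.I := by
        conv_lhs => rw [← Complex.re_add_im w]
        rw [show ((w.re : ℂ) + (w.im : ℂ) * Complex.I) = w.re • (1:ℂ) + w.im • Complex.I by
          simp [Complex.real_smul]]
        rw [map_add, map_smul, map_smul]
      simp only [ContinuousLinearMap.coe_restrictScalars', ContinuousLinearMap.mul_apply',
        ContinuousLinearMap.comp_apply, h2, map_add, map_smul, hLI, hBrot]
      conv_lhs => rw [← Complex.re_add_im w]
      simp only [Complex.real_smul]
      push_cast
      ring
    have hGc : HasFDerivAt (fun w => B (F₁ w + J * F₂ w))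
        (ContinuousLinearMap.mul ℂ ℂ (B (L 1))) z :=
      hasFDerivAt_of_restrictScalars ℝ hGr heq
    exact hGc.differentiableAt.differentiableWithinAt
  · -- the splitting identity
    intro z hz
    rw [hslice z hz J hJ]
    set q := F₁ z + J * F₂ z with hq
    have hGre : (A q).re = ⟪(1:Quaternion ℝ), q⟫ := by
      rw [hA, quatCoord_apply]; simp
    have hGim : (A q).im = ⟪J, q⟫ := by
      rw [hA, quatCoord_apply]; simp
    have hHre : (B q).re = ⟪K, q⟫ := by
      rw [hB, quatCoord_apply]; simp
    have hHim : (B q).im = ⟪J*K, q⟫ := by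
      rw [hB, quatCoord_apply]; simp
    rw [hGre, hGim, hHre, hHim]
    exact hdecomp q
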